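/- Let (A, 𝒜, μ) be a semi-finite measure space. Then the canonical map L^∞(A) → (L¹(A))*, g ↦ (f ↦ ∫ fg dμ), is an isometry. -/

import Mathlib

open MeasureTheory

/-- A measure is semi-finite if every measurable set of positive measure has a
measurable subset of finite positive measure. -/
def SemiFinite {α : Type*} [MeasurableSpace α] (μ : Measure α) : Prop :=
  ∀ s : Set α, MeasurableSet s → 0 < μ s →
    ∃ t : Set α, t ⊆ s ∧ MeasurableSet t ∧ 0 < μ t ∧ μ t < ⊤

lemma sign_mul_self_eq_abs (x : ℝ) : Real.sign x * x = |x| := by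
  rcases lt_trichotomy x 0 with h | h | h
  · rw [Real.sign_of_neg h, abs_of_neg h]; ring
  · simp [h]
  · rw [Real.sign_of_pos h, abs_of_pos h]; ring

lemma abs_sign_le_one (x : ℝ) : |Real.sign x| ≤ 1 := by
  rcases Real.sign_apply_eq x with h | h | h <;> rw [h] <;> norm_num

lemma measurable_sign_comp {α : Type*} [MeasurableSpace α] {G : α → ℝ}
    (hG : Measurable G) : Measurable fun a => Real.sign (G a) := by
  have : (fun a => Real.sign (G a)) =
      fun a => if G a < 0 then (-1 : ℝ) else if 0 < G a then 1 else 0 := by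
    funext a; rw [Real.sign]
  rw [this]
  exact Measurable.ite (measurableSet_lt hG measurable_const)
    measurable_const <| Measurable.ite (measurableSet_lt measurable_const hG)
      measurable_const measurable_const

/-- **The canonical map `L^∞ → (L¹)*` is an isometry on a semi-finite measure
space.** For every `g ∈ L^∞(μ)` the functional `f ↦ ∫ f g dμ` on `L¹(μ)` is bounded
with operator norm equal to `‖g‖_∞`. -/
theorem linfty_isometric_embedding_into_dual_l1
    {α : Type*} [MeasurableSpace α] (μ : Measure α) (hμ : SemiFinite μ)
    (g : Lp ℝ ⊤ μ) :
    ∃ Λ : Lp ℝ 1 μ →L[ℝ] ℝ,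
      (∀ f : Lp ℝ 1 μ, Λ f = ∫ a, f a * g a ∂μ) ∧ ‖Λ‖ = ‖g‖ := by
  classical
  set G : α → ℝ := (g : α → ℝ) with hGdef
  have hG : Measurable G := (Lp.stronglyMeasurable g).measurable
  have hnorm_g : ‖g‖ = (eLpNormEssSup G μ).toReal := by
    rw [Lp.norm_def, eLpNorm_exponent_top]
  have hess_lt : eLpNormEssSup G μ < ⊤ := by
    have := Lp.eLpNorm_lt_top g
    rwa [eLpNorm_exponent_top] at this
  -- a.e. bound for g
  have hg_ae : ∀ᵐ a ∂μ, ‖G a‖ ≤ ‖g‖ := by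
    filter_upwards [ae_le_eLpNormEssSup (f := G) (μ := μ)] with a ha
    rw [hnorm_g]
    have := ENNReal.toReal_mono hess_lt.ne ha
    simpa using this
  -- integrability of f * g for f ∈ L¹
  have hint : ∀ f : Lp ℝ 1 μ, Integrable (fun a => (f : α → ℝ) a * G a) μ := by
    intro f
    have h := Integrable.bdd_mul (L1.integrable_coeFn f) (Lp.aestronglyMeasurable g) hg_ae
    simpa [mul_comm] using h
  -- the linear map
  set L : Lp ℝ 1 μ →ₗ[ℝ] ℝ :=
    { toFun := fun f => ∫ a, (f : α → ℝ) a * G a ∂μ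
      map_add' := by
        intro f₁ f₂
        rw [← integral_add (hint f₁) (hint f₂)]
        refine integral_congr_ae ?_
        filter_upwards [Lp.coeFn_add f₁ f₂] with a ha
        rw [ha, Pi.add_apply]; ring
      map_smul' := by
        intro c f
        simp only [RingHom.id_apply, ← integral_smul]
        refine integral_congr_ae ?_
        filter_upwards [Lp.coeFn_smul c f] with a ha
        rw [ha, Pi.smul_apply, smul_eq_mul, smul_eq_mul]; ring } with hLdef
  have hbound : ∀ f : Lp ℝ 1 μ, ‖L f‖ ≤ ‖g‖ * ‖f‖ := by
    intro f
    have h1 : ‖L f‖ ≤ ∫ a, ‖(f : α → ℝ) a * G a‖ ∂μ :=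
      norm_integral_le_integral_norm _
    have h2 : ∫ a, ‖(f : α → ℝ) a * G a‖ ∂μ ≤ ∫ a, ‖g‖ * ‖(f : α → ℝ) a‖ ∂μ := by
      refine integral_mono_ae (hint f).norm ((L1.integrable_coeFn f).norm.const_mul _) ?_
      filter_upwards [hg_ae] with a ha
      calc ‖(f : α → ℝ) a * G a‖ = ‖G a‖ * ‖(f : α → ℝ) a‖ := by
            rw [norm_mul]; ring
        _ ≤ ‖g‖ * ‖(f : α → ℝ) a‖ := by
            exact mul_le_mul_of_nonneg_right ha (norm_nonneg _)
    have h3 : ∫ a, ‖g‖ * ‖(f : α → ℝ) a‖ ∂μ = ‖g‖ * ‖f‖ := by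
      rw [integral_const_mul, L1.norm_eq_integral_norm]
    exact h1.trans (h2.trans_eq h3)
  refine ⟨L.mkContinuous ‖g‖ hbound, fun f => rfl, le_antisymm
    (LinearMap.mkContinuous_norm_le L (norm_nonneg g) hbound) ?_⟩
  -- lower bound on the operator norm
  set Λ := L.mkContinuous ‖g‖ hbound with hΛ
  by_contra hlt
  push_neg at hlt
  set c : ℝ := ‖Λ‖ with hc
  have hc0 : 0 ≤ c := norm_nonneg _
  set c' : ℝ := (c + ‖g‖) / 2 with hc'
  have hcc' : c < c' := by simp only [hc']; linarith
  have hc'g : c' < ‖g‖ := by simp only [hc']; linarith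
  have hc'0 : 0 ≤ c' := by linarith
  -- the set where |g| exceeds c'
  set s : Set α := {a | c' < ‖G a‖} with hs
  have hs_meas : MeasurableSet s := measurableSet_lt measurable_const hG.norm
  have hs_pos : 0 < μ s := by
    by_contra h
    push_neg at h
    have hs0 : μ s = 0 := le_antisymm h (by simp)
    have hle : ∀ᵐ a ∂μ, ‖G a‖ ≤ c' := by
      rw [ae_iff]
      refine measure_mono_null (fun a ha => ?_) hs0
      simp only [Set.mem_setOf_eq] at ha ⊢
      exact lt_of_not_ge ha
    have := eLpNormEssSup_le_of_ae_bound hle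
    have h2 : ‖g‖ ≤ c' := by
      rw [hnorm_g]
      calc (eLpNormEssSup G μ).toReal ≤ (ENNReal.ofReal c').toReal :=
            ENNReal.toReal_mono ENNReal.ofReal_ne_top this
        _ = c' := ENNReal.toReal_ofReal hc'0
    linarith
  obtain ⟨t, hts, ht_meas, ht_pos, ht_lt⟩ := hμ s hs_meas hs_pos
  have htR : 0 < (μ t).toReal := ENNReal.toReal_pos ht_pos.ne' ht_lt.ne
  -- the test function
  set F : α → ℝ := t.indicator fun a => Real.sign (G a) with hF
  have hF_meas : Measurable F := (measurable_sign_comp hG).indicator ht_meas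
  have hFi : Integrable F μ := by
    rw [hF, integrable_indicator_iff ht_meas]
    refine Integrable.mono' (integrableOn_const ht_lt.ne :
        IntegrableOn (fun _ => (1 : ℝ)) t μ)
      ((measurable_sign_comp hG).aestronglyMeasurable) ?_
    exact ae_of_all _ fun a => by simpa [Real.norm_eq_abs] using abs_sign_le_one (G a)
  have hFmem : MemLp F 1 μ := memLp_one_iff_integrable.2 hFi
  set fL : Lp ℝ 1 μ := hFmem.toLp F with hfL
  -- integrability of |G| on t
  have hGt : IntegrableOn (fun a => |G a|) t μ := by
    refine Integrable.mono' (integrableOn_const ht_lt.ne :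
        IntegrableOn (fun _ => ‖g‖) t μ) (hG.abs.aestronglyMeasurable) ?_
    filter_upwards [ae_restrict_of_ae hg_ae] with a ha
    simpa [Real.norm_eq_abs, abs_abs] using ha
  -- value of Λ at fL
  have hval : Λ fL = ∫ a in t, |G a| ∂μ := by
    have h1 : Λ fL = ∫ a, (fL : α → ℝ) a * G a ∂μ := rfl
    have h2 : ∫ a, (fL : α → ℝ) a * G a ∂μ = ∫ a, F a * G a ∂μ := by
      refine integral_congr_ae ?_
      filter_upwards [hFmem.coeFn_toLp] with a ha
      rw [ha]
    have h3 : ∫ a, F a * G a ∂μ = ∫ a in t, |G a| ∂μ := by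
      rw [← integral_indicator ht_meas]
      refine integral_congr_ae (ae_of_all _ fun a => ?_)
      show t.indicator (fun a => Real.sign (G a)) a * G a = t.indicator (fun a => |G a|) a
      by_cases hat : a ∈ t
      · rw [Set.indicator_of_mem hat, Set.indicator_of_mem hat, sign_mul_self_eq_abs]
      · rw [Set.indicator_of_notMem hat, Set.indicator_of_notMem hat, zero_mul]
    rw [h1, h2, h3]
  -- lower bound for the value
  have hlow : c' * (μ t).toReal ≤ Λ fL := by
    rw [hval]
    calc c' * (μ t).toReal = ∫ _ in t, c' ∂μ := by
          rw [setIntegral_const, smul_eq_mul, mul_comm]; rfl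
      _ ≤ ∫ a in t, |G a| ∂μ := by
          refine setIntegral_mono_on (integrableOn_const ht_lt.ne) hGt ht_meas
            fun a ha => ?_
          have := hts ha
          rw [hs, Set.mem_setOf_eq, Real.norm_eq_abs] at this
          exact this.le
  -- upper bound on ‖fL‖
  have hnfL : ‖fL‖ ≤ (μ t).toReal := by
    rw [L1.norm_eq_integral_norm]
    have h1 : ∫ a, ‖(fL : α → ℝ) a‖ ∂μ = ∫ a, ‖F a‖ ∂μ := by
      refine integral_congr_ae ?_
      filter_upwards [hFmem.coeFn_toLp] with a ha
      rw [ha]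
    rw [h1]
    have h2 : ∫ a, ‖F a‖ ∂μ = ∫ a in t, ‖Real.sign (G a)‖ ∂μ := by
      rw [← integral_indicator ht_meas]
      refine integral_congr_ae (ae_of_all _ fun a => ?_)
      show ‖t.indicator (fun a => Real.sign (G a)) a‖ = t.indicator (fun a => ‖Real.sign (G a)‖) a
      by_cases hat : a ∈ t
      · rw [Set.indicator_of_mem hat, Set.indicator_of_mem hat]
      · rw [Set.indicator_of_notMem hat, Set.indicator_of_notMem hat, norm_zero]
    rw [h2]
    calc ∫ a in t, ‖Real.sign (G a)‖ ∂μ ≤ ∫ _ in t, (1 : ℝ) ∂μ := by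
          refine setIntegral_mono_on ?_ (integrableOn_const ht_lt.ne) ht_meas
            fun a _ => by simpa [Real.norm_eq_abs] using abs_sign_le_one (G a)
          · rw [integrable_indicator_iff ht_meas] at hFi
            simpa [hF, Set.indicator_of_mem, IntegrableOn] using hFi.norm.congr
              (ae_restrict_of_ae (ae_of_all _ fun a => rfl))
      _ = (μ t).toReal := by rw [setIntegral_const, smul_eq_mul, mul_one]; rfl
  -- contradiction
  have hup : Λ fL ≤ c * (μ t).toReal := by
    calc Λ fL ≤ ‖Λ fL‖ := le_abs_self _
      _ ≤ ‖Λ‖ * ‖fL‖ := Λ.le_opNorm fL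
      _ ≤ c * (μ t).toReal := mul_le_mul_of_nonneg_left hnfL hc0
  have : c' * (μ t).toReal ≤ c * (μ t).toReal := hlow.trans hup
  have : c' ≤ c := le_of_mul_le_mul_right (by linarith [this]) htR
  linarith
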